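/- arXiv:math/0412156 — 2 statements merged into one kernel-verified Lean document; each statement's English description precedes it below -/
import Mathlib

section
/- In Q = ℤ² ⋊ ℤ/4, let V ⊆ Q be a subgroup isomorphic to D∞ with V maximal among virtually cyclic subgroups (V = V_max). Then the normalizer of V in Q equals V: N_Q(V) = V. -/
open SemidirectProduct

/-- The automorphism of `ℤ²` given by multiplication by `i`: `(a,b) ↦ (-b,a)`. -/
def J : (ℤ × ℤ) ≃+ (ℤ × ℤ) where
  toFun p := (-p.2, p.1)
  invFun p := (p.2, -p.1)
  left_inv p := by simp
  right_inv p := by simp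
  map_add' p q := by simp [Prod.ext_iff]; ring

abbrev Z2 := Multiplicative (ℤ × ℤ)

def Jm : MulAut Z2 := AddEquiv.toMultiplicative J

lemma Jm_pow_four : Jm ^ 4 = 1 := by
  refine MulEquiv.ext fun x => ?_
  show Jm (Jm (Jm (Jm x))) = x
  simp [Jm, J, AddEquiv.toMultiplicative, Prod.ext_iff]

lemma Jm_pow_mod (n : ℕ) : Jm ^ (n % 4) = Jm ^ n := by
  conv_rhs => rw [← Nat.div_add_mod n 4]
  rw [pow_add, pow_mul, Jm_pow_four, one_pow, one_mul]

/-- The action of `ℤ/4` on `ℤ²` by powers of multiplication by `i`. -/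
def phiQ : Multiplicative (ZMod 4) →* MulAut Z2 where
  toFun s := Jm ^ (Multiplicative.toAdd s).val
  map_one' := by
    show Jm ^ (0 : ZMod 4).val = 1
    simp
  map_mul' a b := by
    show Jm ^ ((Multiplicative.toAdd a + Multiplicative.toAdd b : ZMod 4)).val = _
    rw [ZMod.val_add, Jm_pow_mod, pow_add]

/-- `Q = ℤ² ⋊ ℤ/4`. -/
abbrev Q := Z2 ⋊[phiQ] Multiplicative (ZMod 4)

/-- The generator `t` of the `ℤ/4`-factor of `Q`. -/
def tQ : Q := inr (Multiplicative.ofAdd (1 : ZMod 4))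

/-- The inclusion `ℤ² → Q`. -/
def ιQ (x : ℤ × ℤ) : Q := inl (Multiplicative.ofAdd x)


lemma phiQ0 (z : Z2) : phiQ (.ofAdd 0) z = z := by
  show (Jm ^ (0 : ZMod 4).val) z = _
  rw [show (0 : ZMod 4).val = 0 from rfl]
  simp

lemma phiQ1 (z : Z2) : phiQ (.ofAdd 1) z = .ofAdd (J (Multiplicative.toAdd z)) := by
  show (Jm ^ (1 : ZMod 4).val) z = _
  rw [show (1 : ZMod 4).val = 1 from rfl]
  simp [Jm, J, AddEquiv.toMultiplicative]

lemma phiQ2 (z : Z2) : phiQ (.ofAdd 2) z = z⁻¹ := by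
  show (Jm ^ (2 : ZMod 4).val) z = _
  rw [show (2 : ZMod 4).val = 2 from rfl, pow_succ, pow_one]
  simp [Jm, J, AddEquiv.toMultiplicative]
  rfl

lemma phiQ3 (z : Z2) : phiQ (.ofAdd 3) z = .ofAdd (J.symm (Multiplicative.toAdd z)) := by
  show (Jm ^ (3 : ZMod 4).val) z = _
  rw [show (3 : ZMod 4).val = 3 from rfl, pow_succ, pow_succ, pow_one]
  simp [Jm, J, AddEquiv.toMultiplicative]

lemma r_one_zpow (i : ℤ) : (DihedralGroup.r 1 : DihedralGroup 0) ^ i = DihedralGroup.r i := by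
  induction i using Int.induction_on with
  | zero => rfl
  | succ n ih => rw [zpow_add_one, ih]; rfl
  | pred n ih =>
      rw [sub_eq_add_neg, zpow_add, ih, zpow_neg, zpow_one]
      show _ * (DihedralGroup.r 1)⁻¹ = _
      rw [show (DihedralGroup.r 1 : DihedralGroup 0)⁻¹ = DihedralGroup.r (-1) from rfl]
      exact DihedralGroup.r_mul_r _ _

lemma val4 : ∀ s : ZMod 4, s = 0 ∨ s = 1 ∨ s = 2 ∨ s = 3 := by decide

/-- If `V ⊆ Q = ℤ² ⋊ ℤ/4` is an infinite dihedral subgroup which is maximal in the sense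
that `V ∩ ℤ²` is a maximal infinite cyclic subgroup of `ℤ²` (i.e. `ℤ²/(V ∩ ℤ²)` is
torsion-free, expressed by saying that `n•x ∈ V` for some `n ≠ 0` implies `x ∈ V`), then
`V` is self-normalizing: `N_Q(V) = V`. -/
theorem stmt_18 :
    ∀ V : Subgroup Q, Nonempty (V ≃* DihedralGroup 0) →
      (∀ (x : ℤ × ℤ) (n : ℤ), n ≠ 0 → ιQ (n • x) ∈ V → ιQ x ∈ V) →
      Subgroup.normalizer (V : Set Q) = V := by
  rintro V ⟨e⟩ hmax
  refine le_antisymm ?_ V.le_normalizer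
  set u' : V := e.symm (DihedralGroup.r 1) with hu'
  set g' : V := e.symm (DihedralGroup.sr 0) with hg'
  set u : Q := (u' : Q) with hu
  set g : Q := (g' : Q) with hg
  have humem : u ∈ V := u'.2
  have hgmem : g ∈ V := g'.2
  -- g has order 2
  have hgg : g * g = 1 := by
    rw [hg, ← Subgroup.coe_mul, hg', ← map_mul, DihedralGroup.sr_mul_self, map_one]
    rfl
  have hgne : g ≠ 1 := by
    intro hcon
    rw [hg] at hcon
    have : g' = 1 := by exact_mod_cast hcon
    rw [hg'] at this
    have := e.symm.injective (this.trans (map_one e.symm).symm)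
    rw [DihedralGroup.one_def] at this
    cases this
  -- g u g = u⁻¹
  have hgug : g * u * g = u⁻¹ := by
    have h1 : g' * u' * g' = u'⁻¹ := by
      apply e.injective
      rw [map_mul, map_mul, map_inv, hu', hg']
      simp only [MulEquiv.apply_symm_apply]
      show DihedralGroup.sr (0 + 1) * _ = _
      rw [DihedralGroup.sr_mul_sr]
      rw [show ((DihedralGroup.r 1)⁻¹ : DihedralGroup 0) = DihedralGroup.r (-1) from rfl]
      norm_num
    calc g * u * g = ((g' * u' * g' : V) : Q) := by push_cast [hg, hu]; ring_nf
    _ = ((u'⁻¹ : V) : Q) := by rw [h1]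
    _ = u⁻¹ := by push_cast [hu]; rfl
  -- u² ≠ 1
  have huu : u * u ≠ 1 := by
    intro hcon
    rw [hu, ← Subgroup.coe_mul] at hcon
    have : u' * u' = 1 := by exact_mod_cast hcon
    rw [hu', ← map_mul, ← map_one e.symm] at this
    have := e.symm.injective this
    rw [DihedralGroup.r_mul_r, DihedralGroup.one_def] at this
    have h2 : ((1 : ZMod 0) + 1) = 0 := by injection this
    exact absurd h2 (by decide)
  -- g.right = ofAdd 2
  have hgr : g.right = Multiplicative.ofAdd (2 : ZMod 4) := by
    have h2 : g.right * g.right = 1 := by rw [← mul_right, hgg, one_right]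
    rcases val4 (Multiplicative.toAdd g.right) with h | h | h | h
    · exfalso
      have hgr1 : g.right = 1 := by
        rw [← ofAdd_toAdd g.right, h]; rfl
      have hl : g.left * g.left = 1 := by
        have := congrArg SemidirectProduct.left hgg
        rwa [mul_left, hgr1, map_one, MulAut.one_apply, one_left] at this
      have hl0 : g.left = 1 := by
        have h3 : Multiplicative.toAdd g.left + Multiplicative.toAdd g.left = 0 := by
          rw [← toAdd_mul, hl]; rfl
        have : Multiplicative.toAdd g.left = 0 := by
          have h4 := congrArg Prod.fst h3
          have h5 := congrArg Prod.snd h3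
          simp only [Prod.fst_add, Prod.snd_add, Prod.fst_zero, Prod.snd_zero] at h4 h5
          rw [Prod.ext_iff, Prod.fst_zero, Prod.snd_zero]
          omega
        rw [← ofAdd_toAdd g.left, this]; rfl
      exact hgne (by ext <;> simp [hl0, hgr1])
    · exfalso
      have : (Multiplicative.toAdd g.right) + (Multiplicative.toAdd g.right) = 0 := by
        rw [← toAdd_mul, h2]; rfl
      rw [h] at this; exact absurd this (by decide)
    · rw [← ofAdd_toAdd g.right, h]
    · exfalso
      have : (Multiplicative.toAdd g.right) + (Multiplicative.toAdd g.right) = 0 := by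
        rw [← toAdd_mul, h2]; rfl
      rw [h] at this; exact absurd this (by decide)
  -- u.right = 1
  have hur : u.right = 1 := by
    have h2 : (g.right * u.right) * g.right = u.right⁻¹ := by
      rw [← mul_right, ← mul_right, hgug, inv_right]
    rw [hgr] at h2
    have h3 : ((2 : ZMod 4) + Multiplicative.toAdd u.right) + 2 = -(Multiplicative.toAdd u.right) := by
      have := congrArg Multiplicative.toAdd h2
      simpa using this
    rcases val4 (Multiplicative.toAdd u.right) with h | h | h | h
    · rw [← ofAdd_toAdd u.right, h]; exact ofAdd_zero
    · rw [h] at h3; exact absurd h3 (by decide)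
    · exfalso
      apply huu
      have hur2 : u.right = Multiplicative.ofAdd (2 : ZMod 4) := by
        rw [← ofAdd_toAdd u.right, h]
      ext : 1
      · rw [mul_left, hur2, phiQ2, mul_inv_cancel, one_left]
      · rw [mul_right, hur2, one_right]
        show ((2 : ZMod 4) + 2) = 0
        decide
    · rw [h] at h3; exact absurd h3 (by decide)
  set x : ℤ × ℤ := Multiplicative.toAdd u.left with hxdef
  have hx : x ≠ 0 := by
    intro hcon
    apply huu
    have hul : u.left = 1 := by
      rw [← ofAdd_toAdd u.left, ← hxdef, hcon]; rfl
    have : u = 1 := by ext <;> simp [hul, hur]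
    rw [this, one_mul]
  have huinl : u = inl u.left := by
    ext : 1
    · rw [left_inl]
    · rw [right_inl, hur]
  -- powers of u
  have hupow : ∀ i : ℤ, u ^ i = ιQ (i • x) := by
    intro i
    rw [huinl, ← map_zpow]
    show inl _ = inl _
    congr 1
  have hiota : ∀ i : ℤ, ιQ (i • x) ∈ V := by
    intro i
    rw [← hupow]
    exact zpow_mem humem i
  -- translations in V are powers of u
  have trans : ∀ v : Q, v ∈ V → v.right = 1 → ∃ i : ℤ, Multiplicative.toAdd v.left = i • x := by
    intro v hv hr
    have hcomm : (⟨v, hv⟩ : V) * u' = u' * ⟨v, hv⟩ := by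
      apply Subtype.ext
      push_cast [← hu]
      ext : 1
      · rw [mul_left, mul_left, hr, hur, map_one]
        exact mul_comm _ _
      · rw [mul_right, mul_right, hr, hur]
    have hd := congrArg e hcomm
    rw [map_mul, map_mul, hu', MulEquiv.apply_symm_apply] at hd
    rcases hde : e ⟨v, hv⟩ with j | j
    · rw [hde] at hd
      have hv' : (⟨v, hv⟩ : V) = u' ^ (show ℤ from j) := by
        apply e.injective
        rw [map_zpow, hu', MulEquiv.apply_symm_apply, r_one_zpow, hde]
      refine ⟨(show ℤ from j), ?_⟩
      have : v = u ^ (show ℤ from j) := by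
        have := congrArg (Subtype.val) hv'
        rwa [SubgroupClass.coe_zpow, ← hu] at this
      rw [this, hupow]
      show Multiplicative.toAdd (inl (Multiplicative.ofAdd ((show ℤ from j) • x)) : Q).left = _
      rw [left_inl, toAdd_ofAdd]
    · exfalso
      rw [hde, DihedralGroup.sr_mul_r, DihedralGroup.r_mul_sr] at hd
      have : j + 1 = j - 1 := by injection hd
      have h2 : (show ℤ from j) + 1 = (show ℤ from j) - 1 := this
      omega
  -- key: normalizer elements with trivial right component are in V
  have key : ∀ k : Q, k ∈ Subgroup.normalizer (V : Set Q) → k.right = 1 → k ∈ V := by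
    intro k hk hkr
    have hw : k * g * k⁻¹ ∈ V := (Subgroup.mem_normalizer_iff.mp hk g).mp hgmem
    set w : Q := k * g * k⁻¹ with hwdef
    have hwr : w.right = Multiplicative.ofAdd (2 : ZMod 4) := by
      rw [hwdef, mul_right, mul_right, inv_right, hkr, hgr]
      simp
    have heq : w * k = k * g := by rw [hwdef, inv_mul_cancel_right]
    have hL : w.left * phiQ w.right k.left = k.left * phiQ k.right g.left :=
      congrArg SemidirectProduct.left heq
    rw [hkr, map_one, MulAut.one_apply, hwr, phiQ2] at hL
    have hwl : w.left = k.left * g.left * k.left := by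
      rw [← hL, inv_mul_cancel_right]
    have hm : w * g ∈ V := V.mul_mem hw hgmem
    have hmr : (w * g).right = 1 := by
      rw [mul_right, hwr, hgr]; decide
    obtain ⟨i, hi⟩ := trans (w * g) hm hmr
    have hml : Multiplicative.toAdd ((w * g).left)
        = (2 : ℤ) • (Multiplicative.toAdd k.left) := by
      rw [mul_left, hwr, phiQ2, hwl, toAdd_mul, toAdd_mul, toAdd_mul, toAdd_inv, two_zsmul]
      abel
    have h2y : ιQ ((2 : ℤ) • Multiplicative.toAdd k.left) ∈ V := by
      have h2i : (2 : ℤ) • Multiplicative.toAdd k.left = i • x := by rw [← hml, hi]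
      rw [h2i]; exact hiota i
    have hky : ιQ (Multiplicative.toAdd k.left) ∈ V :=
      hmax _ 2 (by norm_num) h2y
    have hkform : k = ιQ (Multiplicative.toAdd k.left) := by
      ext : 1
      · rw [show (ιQ (Multiplicative.toAdd k.left)).left
            = Multiplicative.ofAdd (Multiplicative.toAdd k.left) from rfl, ofAdd_toAdd]
      · rw [show (ιQ (Multiplicative.toAdd k.left)).right = 1 from rfl, hkr]
    rw [hkform]; exact hky
  intro h hh
  have hcu : h * u * h⁻¹ ∈ V := (Subgroup.mem_normalizer_iff.mp hh u).mp humem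
  set w : Q := h * u * h⁻¹ with hwdef
  have hwr : w.right = 1 := by
    rw [hwdef, mul_right, mul_right, inv_right, hur, mul_one, mul_inv_cancel]
  have heq : w * h = h * u := by rw [hwdef, inv_mul_cancel_right]
  have hL : w.left * phiQ w.right h.left = h.left * phiQ h.right u.left :=
    congrArg SemidirectProduct.left heq
  rw [hwr, map_one, MulAut.one_apply] at hL
  have hwl : w.left = phiQ h.right u.left := by
    have h5 : w.left * h.left = phiQ h.right u.left * h.left := by
      rw [hL, mul_comm h.left]
    exact mul_right_cancel h5
  obtain ⟨i, hi⟩ := trans w hcu hwr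
  rw [hwl] at hi
  rcases val4 (Multiplicative.toAdd h.right) with hs | hs | hs | hs
  · exact key h hh (by rw [← ofAdd_toAdd h.right, hs]; exact ofAdd_zero)
  · exfalso
    rw [← ofAdd_toAdd h.right, hs, phiQ1, toAdd_ofAdd] at hi
    have h1 : -x.2 = i * x.1 := by
      have := congrArg Prod.fst hi
      simpa [J, smul_eq_mul] using this
    have h2 : x.1 = i * x.2 := by
      have := congrArg Prod.snd hi
      simpa [J, smul_eq_mul] using this
    have e1 : x.2 = -(i * x.1) := by linarith
    have e2 : x.1 = i * -(i * x.1) := by rw [e1] at h2; exact h2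
    have e3 : x.1 * x.1 = -((i * x.1) * (i * x.1)) := by
      calc x.1 * x.1 = (i * -(i * x.1)) * x.1 := by rw [← e2]
      _ = -((i * x.1) * (i * x.1)) := by ring
    have e4 : x.1 = 0 := by
      have := mul_self_nonneg (i * x.1)
      have := mul_self_nonneg x.1
      have : x.1 * x.1 = 0 := by linarith
      exact mul_self_eq_zero.mp this
    have e5 : x.2 = 0 := by rw [e4, mul_zero] at h1; linarith
    exact hx (Prod.ext_iff.mpr ⟨by simp [e4], by simp [e5]⟩)
  · have hg2 : h * g ∈ V := by
      refine key (h * g) (Subgroup.mul_mem _ hh (V.le_normalizer hgmem)) ?_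
      rw [mul_right, ← ofAdd_toAdd h.right, hs, hgr]
      decide
    have h6 := V.mul_mem hg2 (V.inv_mem hgmem)
    rwa [mul_inv_cancel_right] at h6
  · exfalso
    rw [← ofAdd_toAdd h.right, hs, phiQ3, toAdd_ofAdd] at hi
    have h1 : x.2 = i * x.1 := by
      have := congrArg Prod.fst hi
      simpa [J, smul_eq_mul] using this
    have h2 : -x.1 = i * x.2 := by
      have := congrArg Prod.snd hi
      simpa [J, smul_eq_mul] using this
    have e2 : x.1 = -(i * (i * x.1)) := by
      rw [h1] at h2
      linarith
    have e3 : x.1 * x.1 = -((i * x.1) * (i * x.1)) := by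
      calc x.1 * x.1 = (-(i * (i * x.1))) * x.1 := by rw [← e2]
      _ = -((i * x.1) * (i * x.1)) := by ring
    have e4 : x.1 = 0 := by
      have := mul_self_nonneg (i * x.1)
      have := mul_self_nonneg x.1
      have : x.1 * x.1 = 0 := by linarith
      exact mul_self_eq_zero.mp this
    have e5 : x.2 = 0 := by rw [e4, mul_zero] at h1; linarith
    exact hx (Prod.ext_iff.mpr ⟨by simp [e4], by simp [e5]⟩)
end

section
/- For every subgroup V of Q = ℤ² ⋊ ℤ/4 isomorphic to D∞, the subgroup V_max := ⟨v₂, (V ∩ ℤ²)_max⟩ (with v₂ ∈ V any element of order two and (V∩ℤ²)_max the maximal infinite cyclic subgroup of ℤ² containing V∩ℤ²) is independent of the choice of v₂, is isomorphic to D∞, contains V, and is the unique maximal virtually cyclic subgroup of Q containing V among subgroups isomorphic to D∞; furthermore if V ⊆ W with W virtually cyclic then W ≅ D∞ and V_max = W_max. -/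
open SemidirectProduct

/-- A group is virtually cyclic if it has a cyclic subgroup of finite index. -/
def VirtuallyCyclic (V : Type*) [Group V] : Prop :=
  ∃ H : Subgroup V, IsCyclic H ∧ H.index ≠ 0

-- ### basic computation lemmas

open Multiplicative

/-- element with rotation part 2 -/
def mkv (w : ℤ × ℤ) : Q := ⟨ofAdd w, ofAdd (2 : ZMod 4)⟩

lemma Jm_apply (x : ℤ × ℤ) : Jm (ofAdd x) = ofAdd (J x) := rfl

lemma phiQ_two (x : ℤ × ℤ) : phiQ (ofAdd (2 : ZMod 4)) (ofAdd x) = ofAdd (-x) := by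
  show (Jm ^ (2:ZMod 4).val) (ofAdd x) = _
  have : (2:ZMod 4).val = 2 := rfl
  rw [this, pow_two]
  show Jm (Jm (ofAdd x)) = _
  rw [Jm_apply, Jm_apply]
  congr 1

lemma phiQ_zero (x : ℤ × ℤ) : phiQ (ofAdd (0 : ZMod 4)) (ofAdd x) = ofAdd x := by
  show (Jm ^ (0:ZMod 4).val) (ofAdd x) = _
  simp

lemma ι_mul (x y : ℤ × ℤ) : ιQ x * ιQ y = ιQ (x + y) := by
  unfold ιQ; rw [← map_mul, ← ofAdd_add]

lemma ι_zero : ιQ 0 = 1 := by unfold ιQ; simp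

lemma ι_left (x : ℤ × ℤ) : (ιQ x).left = ofAdd x := rfl
lemma ι_right (x : ℤ × ℤ) : (ιQ x).right = 1 := rfl
lemma mkv_left (x : ℤ × ℤ) : (mkv x).left = ofAdd x := rfl
lemma mkv_right (x : ℤ × ℤ) : (mkv x).right = ofAdd (2 : ZMod 4) := rfl

lemma ι_inj {x y : ℤ × ℤ} (h : ιQ x = ιQ y) : x = y := by
  have := congrArg SemidirectProduct.left h
  exact Multiplicative.ofAdd.injective this

lemma ι_eq_one {x : ℤ × ℤ} (h : ιQ x = 1) : x = 0 := by
  have : ιQ x = ιQ 0 := by rw [ι_zero, h]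
  exact ι_inj this

lemma ι_zpow (x : ℤ × ℤ) (n : ℤ) : (ιQ x) ^ n = ιQ (n • x) := by
  unfold ιQ
  rw [← map_zpow]
  congr 1

lemma ι_ne_mkv (x w : ℤ × ℤ) : ιQ x ≠ mkv w := by
  intro h
  have := congrArg SemidirectProduct.right h
  rw [ι_right, mkv_right] at this
  have h2 : (ofAdd (0 : ZMod 4)) = ofAdd (2 : ZMod 4) := this
  exact absurd (Multiplicative.ofAdd.injective h2) (by decide)

lemma mkv_mul_ι (w x : ℤ × ℤ) : mkv w * ιQ x = mkv (w - x) := by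
  refine SemidirectProduct.ext ?_ ?_
  · rw [SemidirectProduct.mul_left, mkv_left, mkv_right, ι_left, phiQ_two, mkv_left, ← ofAdd_add]
    exact congrArg ofAdd (by ring)
  · rw [SemidirectProduct.mul_right, mkv_right, ι_right, mul_one, mkv_right]

lemma ι_mul_mkv (x w : ℤ × ℤ) : ιQ x * mkv w = mkv (x + w) := by
  refine SemidirectProduct.ext ?_ ?_
  · rw [SemidirectProduct.mul_left, ι_left, ι_right, mkv_left]
    show ofAdd x * phiQ 1 (ofAdd w) = _
    rw [map_one]
    show ofAdd x * ofAdd w = _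
    rw [← ofAdd_add, mkv_left]
  · rw [SemidirectProduct.mul_right, ι_right, mkv_right, one_mul, mkv_right]

lemma mkv_mul_mkv (w u : ℤ × ℤ) : mkv w * mkv u = ιQ (w - u) := by
  refine SemidirectProduct.ext ?_ ?_
  · rw [SemidirectProduct.mul_left, mkv_left, mkv_right, mkv_left, phiQ_two, ι_left, ← ofAdd_add]
    exact congrArg ofAdd (by ring)
  · rw [SemidirectProduct.mul_right, mkv_right, mkv_right, ι_right, ← ofAdd_add]
    show ofAdd ((2+2 : ZMod 4)) = ofAdd (0 : ZMod 4)
    decide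

lemma mkv_sq (w : ℤ × ℤ) : mkv w * mkv w = 1 := by
  rw [mkv_mul_mkv, sub_self, ι_zero]

lemma mkv_inv (w : ℤ × ℤ) : (mkv w)⁻¹ = mkv w :=
  inv_eq_of_mul_eq_one_right (mkv_sq w)

/-- classification of elements by their right component -/
lemma right_cases (q : Q) :
    (∃ x, q = ιQ x) ∨ (∃ x, q = mkv x) ∨
    (q.right = ofAdd (1 : ZMod 4)) ∨ (q.right = ofAdd (3 : ZMod 4)) := by
  have h4 : ∀ s : ZMod 4, s = 0 ∨ s = 1 ∨ s = 2 ∨ s = 3 := by decide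
  rcases h4 (Multiplicative.toAdd q.right) with h | h | h | h
  · left
    refine ⟨Multiplicative.toAdd q.left, SemidirectProduct.ext ?_ ?_⟩
    · rw [ι_left]; simp
    · rw [ι_right]
      show q.right = ofAdd (0 : ZMod 4)
      rw [← h]; simp
  · right; right; left
    rw [← h]; simp
  · right; left
    refine ⟨Multiplicative.toAdd q.left, SemidirectProduct.ext ?_ ?_⟩
    · rw [mkv_left]; simp
    · rw [mkv_right, ← h]; simp
  · right; right; right
    rw [← h]; simp

/-- conjugation of a ℤ²-element -/
lemma conj_ι (q : Q) (x : ℤ × ℤ) :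
    q * ιQ x * q⁻¹ = inl (phiQ q.right (ofAdd x)) := by
  refine SemidirectProduct.ext ?_ ?_
  · rw [SemidirectProduct.mul_left, SemidirectProduct.mul_left, SemidirectProduct.inv_left,
      SemidirectProduct.mul_right, ι_left, ι_right, mul_one]
    show q.left * phiQ q.right (ofAdd x) * phiQ q.right ((phiQ q.right⁻¹) q.left⁻¹) = _
    have : (phiQ q.right) ((phiQ q.right⁻¹) q.left⁻¹) = q.left⁻¹ := by
      rw [← MulAut.mul_apply, ← map_mul, mul_inv_cancel, map_one, MulAut.one_apply]
    rw [this]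
    show _ = phiQ q.right (ofAdd x)
    rw [mul_comm q.left ((phiQ q.right) (ofAdd x)), mul_assoc, mul_inv_cancel, mul_one]
  · rw [SemidirectProduct.mul_right, SemidirectProduct.mul_right, SemidirectProduct.inv_right,
      ι_right, mul_one, mul_inv_cancel]
    rfl

lemma smul_int (n : ℤ) (x : ℤ × ℤ) : n • x = (n * x.1, n * x.2) := rfl

lemma smul_eq_zero_int {n : ℤ} {x : ℤ × ℤ} (h : n • x = 0) (hx : x ≠ 0) : n = 0 := by
  rw [smul_int, Prod.ext_iff] at h
  rcases (by simpa [Prod.ext_iff] using hx : ¬(x.1 = 0 ∧ x.2 = 0)) with h'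
  rcases mul_eq_zero.mp h.1 with h1 | h1
  · exact h1
  · rcases mul_eq_zero.mp h.2 with h2 | h2
    · exact h2
    · exact absurd ⟨h1, h2⟩ h'

lemma smul_cancel {n : ℤ} {x y : ℤ × ℤ} (hn : n ≠ 0) (h : n • x = n • y) : x = y := by
  have : n • (x - y) = 0 := by rw [smul_sub, h, sub_self]
  by_contra hxy
  exact hn (smul_eq_zero_int this (fun hc => hxy (sub_eq_zero.mp hc)))

/-- a subgroup of ℤ² in which every two nonzero elements are dependent is cyclic -/
lemma rank_one_cyclic (A : AddSubgroup (ℤ × ℤ))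
    (hdep : ∀ a ∈ A, ∀ b ∈ A, a ≠ 0 → b ≠ 0 → ∃ i j : ℤ, i ≠ 0 ∧ j ≠ 0 ∧ j • a = i • b) :
    ∃ c, c ∈ A ∧ ∀ x ∈ A, ∃ k : ℤ, x = k • c := by
  by_cases htriv : ∀ x ∈ A, x = (0 : ℤ × ℤ)
  · exact ⟨0, A.zero_mem, fun x hx => ⟨0, by rw [htriv x hx]; simp⟩⟩
  push_neg at htriv
  obtain ⟨a, haA, ha⟩ := htriv
  -- the linear functional
  set l : (ℤ × ℤ) →+ ℤ :=
    { toFun := fun x => a.1 * x.1 + a.2 * x.2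
      map_zero' := by simp
      map_add' := fun x y => by simp; ring } with hl
  have hla : l a ≠ 0 := by
    simp only [hl, AddMonoidHom.coe_mk, ZeroHom.coe_mk]
    intro h
    apply ha
    have h1 : a.1 * a.1 + a.2 * a.2 = 0 := h
    have h2 := (add_eq_zero_iff_of_nonneg (mul_self_nonneg a.1) (mul_self_nonneg a.2)).mp h1
    exact Prod.ext_iff.mpr ⟨mul_self_eq_zero.mp h2.1, mul_self_eq_zero.mp h2.2⟩
  have lsmul : ∀ (n : ℤ) (x : ℤ × ℤ), l (n • x) = n * l x := fun n x => by
    simp only [hl, AddMonoidHom.coe_mk, ZeroHom.coe_mk, smul_int]; ring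
  have hker : ∀ x ∈ A, l x = 0 → x = 0 := by
    intro x hx hlx
    by_contra hx0
    obtain ⟨i, j, hi, hj, hij⟩ := hdep x hx a haA hx0 ha
    have : j * l x = i * l a := by rw [← lsmul, ← lsmul, hij]
    rw [hlx, mul_zero] at this
    exact hi (by rcases mul_eq_zero.mp this.symm with h | h; exact h; exact absurd h hla)
  have hinj : ∀ x ∈ A, ∀ y ∈ A, l x = l y → x = y := by
    intro x hx y hy hxy
    have : x - y ∈ A := A.sub_mem hx hy
    have h0 : l (x - y) = 0 := by rw [map_sub, hxy, sub_self]
    have := hker _ this h0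
    exact sub_eq_zero.mp this
  -- image subgroup of ℤ
  obtain ⟨g, hg⟩ := Int.subgroup_cyclic (A.map l)
  have hgmem : g ∈ A.map l := hg ▸ AddSubgroup.subset_closure rfl
  obtain ⟨c, hcA, hcl⟩ := hgmem
  refine ⟨c, hcA, fun x hx => ?_⟩
  have : l x ∈ A.map l := ⟨x, hx, rfl⟩
  rw [hg, AddSubgroup.mem_closure_singleton] at this
  obtain ⟨k, hk⟩ := this
  refine ⟨k, hinj x hx (k • c) (A.zsmul_mem hcA k) ?_⟩
  rw [lsmul, hcl]
  rw [← hk, smul_eq_mul]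

def zi : ZMod 0 → ℤ := fun i => i

lemma zi_add (i j : ZMod 0) : zi (i + j) = zi i + zi j := rfl
lemma zi_sub (i j : ZMod 0) : zi (i - j) = zi i - zi j := rfl
lemma zi_inj {i j : ZMod 0} (h : zi i = zi j) : i = j := h
def iz : ℤ → ZMod 0 := fun i => i
lemma zi_iz (i : ℤ) : zi (iz i) = i := rfl

open DihedralGroup in
/-- the standard homomorphism from `D∞` determined by `v` and `c` -/
def fD (v c : ℤ × ℤ) : DihedralGroup 0 →* Q where
  toFun := fun x => match x with
    | .r i => ιQ (zi i • c)
    | .sr i => mkv (v - zi i • c)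
  map_one' := by
    show ιQ (zi (0 : ZMod 0) • c) = 1
    show ιQ ((0 : ℤ) • c) = 1
    rw [zero_smul, ι_zero]
  map_mul' := by
    rintro (i | i) (j | j)
    · show ιQ _ = ιQ _ * ιQ _
      rw [ι_mul]
      congr 1
      rw [zi_add, add_smul]
    · show mkv _ = ιQ _ * mkv _
      rw [ι_mul_mkv]
      congr 1
      rw [zi_sub, sub_smul]; ring
    · show mkv _ = mkv _ * ιQ _
      rw [mkv_mul_ι]
      congr 1
      rw [zi_add, add_smul]; ring
    · show ιQ _ = mkv _ * mkv _
      rw [mkv_mul_mkv]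
      congr 1
      rw [zi_sub, sub_smul]; ring

open DihedralGroup in
lemma fD_r (v c : ℤ × ℤ) (i : ZMod 0) : fD v c (r i) = ιQ (zi i • c) := rfl

open DihedralGroup in
lemma fD_sr (v c : ℤ × ℤ) (i : ZMod 0) : fD v c (sr i) = mkv (v - zi i • c) := rfl

open DihedralGroup in
lemma mem_fD (v c : ℤ × ℤ) (q : Q) :
    q ∈ (fD v c).range ↔ (∃ i : ℤ, q = ιQ (i • c)) ∨ (∃ i : ℤ, q = mkv (v - i • c)) := by
  constructor
  · rintro ⟨(i | i), rfl⟩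
    · exact Or.inl ⟨zi i, rfl⟩
    · exact Or.inr ⟨zi i, rfl⟩
  · rintro (⟨i, rfl⟩ | ⟨i, rfl⟩)
    · exact ⟨r (iz i), by rw [fD_r, zi_iz]⟩
    · exact ⟨sr (iz i), by rw [fD_sr, zi_iz]⟩

lemma mkv_inj {w u : ℤ × ℤ} (h : mkv w = mkv u) : w = u :=
  Multiplicative.ofAdd.injective (congrArg SemidirectProduct.left h)

lemma smul_cancel_right {i j : ℤ} {c : ℤ × ℤ} (hc : c ≠ 0) (h : i • c = j • c) : i = j := by
  by_contra hne
  have hsub : (i - j) • c = 0 := by rw [sub_smul, h, sub_self]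
  exact hne (sub_eq_zero.mp (smul_eq_zero_int hsub hc))

open DihedralGroup in
lemma fD_inj {v c : ℤ × ℤ} (hc : c ≠ 0) : Function.Injective (fD v c) := by
  rintro (i | i) (j | j) h
  · exact congrArg r (zi_inj (smul_cancel_right hc (ι_inj (h : ιQ (zi i • c) = ιQ (zi j • c)))))
  · exact absurd h (ι_ne_mkv _ _)
  · exact absurd h.symm (ι_ne_mkv _ _)
  · have h2 := mkv_inj (h : mkv (v - zi i • c) = mkv (v - zi j • c))
    have h3 : zi i • c = zi j • c := by
      have := sub_right_injective h2
      exact this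
    exact congrArg sr (zi_inj (smul_cancel_right hc h3))

lemma phiQ_one (x : ℤ × ℤ) : phiQ (ofAdd (1 : ZMod 4)) (ofAdd x) = ofAdd (J x) := by
  show (Jm ^ (1 : ZMod 4).val) (ofAdd x) = _
  have : (1 : ZMod 4).val = 1 := rfl
  rw [this, pow_one, Jm_apply]

lemma phiQ_three (x : ℤ × ℤ) : phiQ (ofAdd (3 : ZMod 4)) (ofAdd x) = ofAdd (J (J (J x))) := by
  show (Jm ^ (3 : ZMod 4).val) (ofAdd x) = _
  have : (3 : ZMod 4).val = 3 := rfl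
  rw [this, pow_succ, pow_two]
  show Jm (Jm (Jm (ofAdd x))) = _
  rw [Jm_apply, Jm_apply, Jm_apply]

lemma JJ (x : ℤ × ℤ) : J (J x) = -x := by simp [J, Prod.ext_iff]
lemma J3 (x : ℤ × ℤ) : J (J (J x)) = -J x := by rw [JJ]

lemma Jd_not_multiple {d : ℤ × ℤ} (hd : d ≠ 0) {k : ℤ} (h : J d = k • d) : False := by
  have h2 : J (J d) = k • (k • d) := by
    conv_lhs => rw [h]
    rw [map_zsmul J k d, h]
  rw [JJ] at h2
  have h3 : (k * k + 1) • d = 0 := by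
    rw [add_smul, mul_smul, one_smul, ← h2]
    abel
  have := smul_eq_zero_int h3 hd
  nlinarith

/-- in a subgroup whose ℤ²-part is generated by `d ≠ 0`, there is no element with
rotation part `1` or `3` -/
lemma no_one_elt (U : Subgroup Q) (d : ℤ × ℤ) (hd : d ≠ 0) (hdU : ιQ d ∈ U)
    (hgen : ∀ x : ℤ × ℤ, ιQ x ∈ U → ∃ k : ℤ, x = k • d)
    {q : Q} (hq : q ∈ U) : (∃ x, q = ιQ x) ∨ (∃ x, q = mkv x) := by
  rcases right_cases q with h | h | h | h
  · exact Or.inl h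
  · exact Or.inr h
  · exfalso
    have hc : q * ιQ d * q⁻¹ ∈ U := mul_mem (mul_mem hq hdU) (inv_mem hq)
    rw [conj_ι, h, phiQ_one] at hc
    obtain ⟨k, hk⟩ := hgen (J d) hc
    exact Jd_not_multiple hd hk
  · exfalso
    have hc : q * ιQ d * q⁻¹ ∈ U := mul_mem (mul_mem hq hdU) (inv_mem hq)
    rw [conj_ι, h, phiQ_three, J3] at hc
    obtain ⟨k, hk⟩ := hgen (-J d) hc
    have : J d = (-k) • d := by rw [neg_smul, ← hk, neg_neg]
    exact Jd_not_multiple hd this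

/-- the structure theorem for subgroups containing `mkv v` whose ℤ²-part
is infinite cyclic generated by `d` -/
lemma struct (U : Subgroup Q) (v d : ℤ × ℤ) (hd : d ≠ 0)
    (hdU : ιQ d ∈ U) (hgen : ∀ x : ℤ × ℤ, ιQ x ∈ U → ∃ k : ℤ, x = k • d)
    (hv : mkv v ∈ U) : U = (fD v d).range := by
  ext q
  rw [mem_fD]
  constructor
  · intro hq
    rcases no_one_elt U d hd hdU hgen hq with ⟨x, rfl⟩ | ⟨x, rfl⟩
    · obtain ⟨k, hk⟩ := hgen x hq
      exact Or.inl ⟨k, by rw [hk]⟩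
    · have hmem : ιQ (x - v) ∈ U := by
        rw [← mkv_mul_mkv]
        exact mul_mem hq hv
      obtain ⟨k, hk⟩ := hgen _ hmem
      refine Or.inr ⟨-k, ?_⟩
      congr 1
      rw [neg_smul, sub_neg_eq_add, ← hk]
      abel
  · rintro (⟨i, rfl⟩ | ⟨i, rfl⟩)
    · rw [← ι_zpow]
      exact zpow_mem hdU i
    · rw [← mkv_mul_ι, ← ι_zpow]
      exact mul_mem hv (zpow_mem hdU i)

open DihedralGroup

def rHom : Multiplicative ℤ →* DihedralGroup 0 where
  toFun n := r (iz (Multiplicative.toAdd n))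
  map_one' := (one_def).symm
  map_mul' a b := by
    rw [r_mul_r]
    rfl

lemma r_zpow (i : ZMod 0) (m : ℤ) : (r i) ^ m = r (iz (m * zi i)) := by
  have h1 : r i = rHom (ofAdd (zi i)) := rfl
  rw [h1, ← map_zpow]
  congr 1

lemma smul_eq_zero_vec {n : ℤ} {x : ℤ × ℤ} (hn : n ≠ 0) (h : n • x = 0) : x = 0 := by
  by_contra hx
  exact hn (smul_eq_zero_int h hx)

/-- elements of a subgroup isomorphic to `D∞` lying in ℤ² map to `r`-elements -/
lemma image_shape (V : Subgroup Q) (e : ↥V ≃* DihedralGroup 0) {a : ℤ × ℤ}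
    (h : ιQ a ∈ V) (ha : a ≠ 0) : ∃ p : ℤ, p ≠ 0 ∧ e ⟨ιQ a, h⟩ = r (iz p) := by
  set x : ↥V := ⟨ιQ a, h⟩ with hx
  rcases hex : e x with i | i
  · refine ⟨zi i, ?_, by rfl⟩
    intro h0
    have hi : i = (0 : ZMod 0) := h0
    rw [hi, ← one_def] at hex
    have : x = 1 := e.injective (by rw [hex, map_one])
    have : ιQ a = 1 := congrArg Subtype.val this
    exact ha (ι_eq_one this)
  · exfalso
    have hsq : e (x * x) = 1 := by
      rw [map_mul, hex, sr_mul_sr, sub_self, ← one_def]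
    have hx1 : x * x = 1 := e.injective (by rw [hsq, map_one])
    have : ιQ a * ιQ a = 1 := congrArg Subtype.val hx1
    rw [ι_mul] at this
    have h0 := ι_eq_one this
    apply ha
    have h2 : (2 : ℤ) • a = 0 := by rw [two_smul]; exact h0
    exact smul_eq_zero_vec two_ne_zero h2

lemma dep_of_iso (V : Subgroup Q) (e : ↥V ≃* DihedralGroup 0) :
    ∀ a b : ℤ × ℤ, ιQ a ∈ V → ιQ b ∈ V → a ≠ 0 → b ≠ 0 →
      ∃ i j : ℤ, i ≠ 0 ∧ j ≠ 0 ∧ j • a = i • b := by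
  intro a b haV hbV ha hb
  obtain ⟨p, hp, hep⟩ := image_shape V e haV ha
  obtain ⟨q, hq, heq⟩ := image_shape V e hbV hb
  refine ⟨p, q, hp, hq, ?_⟩
  have h1 : e (⟨ιQ a, haV⟩ ^ q) = r (iz (q * p)) := by
    rw [map_zpow, hep, _root_.r_zpow]
    congr 2
  have h2 : e (⟨ιQ b, hbV⟩ ^ p) = r (iz (p * q)) := by
    rw [map_zpow, heq, _root_.r_zpow]
    congr 2
  have h3 : (⟨ιQ a, haV⟩ : ↥V) ^ q = ⟨ιQ b, hbV⟩ ^ p := by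
    apply e.injective
    rw [h1, h2, mul_comm]
  have h4 : (ιQ a) ^ q = (ιQ b) ^ p := congrArg Subtype.val h3
  rw [ι_zpow, ι_zpow] at h4
  exact ι_inj h4

lemma dep_of_vc (U : Subgroup Q) (hvc : VirtuallyCyclic ↥U) :
    ∀ a b : ℤ × ℤ, ιQ a ∈ U → ιQ b ∈ U → a ≠ 0 → b ≠ 0 →
      ∃ i j : ℤ, i ≠ 0 ∧ j ≠ 0 ∧ j • a = i • b := by
  obtain ⟨H, hcyc, hind⟩ := hvc
  obtain ⟨g, hg⟩ := hcyc.exists_generator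
  intro a b haU hbU ha hb
  set gQ : Q := ((g : ↥U) : Q) with hgQ
  have key : ∀ (x : ℤ × ℤ), ιQ x ∈ U → x ≠ 0 →
      ∃ (n : ℤ) (p : ℤ), n ≠ 0 ∧ p ≠ 0 ∧ gQ ^ p = ιQ (n • x) := by
    intro x hxU hx
    obtain ⟨n, hn0, _, hnH⟩ := Subgroup.exists_pow_mem_of_index_ne_zero hind ⟨ιQ x, hxU⟩
    obtain ⟨p, hp⟩ := Subgroup.mem_zpowers_iff.mp (hg ⟨_, hnH⟩)
    have hpQ : gQ ^ p = ιQ ((n : ℤ) • x) := by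
      rw [hgQ]
      calc ((g : ↥U) : Q) ^ p = (((g ^ p : ↥H) : ↥U) : Q) := by
            push_cast
            rfl
        _ = (((⟨(⟨ιQ x, hxU⟩ : ↥U) ^ n, hnH⟩ : ↥H) : ↥U) : Q) := by rw [hp]
        _ = (ιQ x) ^ (n : ℤ) := by push_cast; rfl
        _ = ιQ ((n : ℤ) • x) := ι_zpow x n
    refine ⟨n, p, by exact_mod_cast hn0.ne', ?_, hpQ⟩
    intro hp0
    rw [hp0, zpow_zero] at hpQ
    have h0 : (n : ℤ) • x = 0 := ι_eq_one hpQ.symm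
    have := smul_eq_zero_int h0 hx
    omega
  obtain ⟨n, p, hn, hp, hpQ⟩ := key a haU ha
  obtain ⟨m, q, hm, hq, hqQ⟩ := key b hbU hb
  refine ⟨p * m, q * n, mul_ne_zero hp hm, mul_ne_zero hq hn, ?_⟩
  have h1 : (gQ ^ p) ^ q = ιQ ((q * n) • a) := by
    rw [hpQ, ι_zpow, mul_smul]
  have h2 : (gQ ^ q) ^ p = ιQ ((p * m) • b) := by
    rw [hqQ, ι_zpow, mul_smul]
  have h3 : (gQ ^ p) ^ q = (gQ ^ q) ^ p := by
    rw [← zpow_mul, ← zpow_mul, mul_comm]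
  exact ι_inj (by rw [← h1, h3, h2])

lemma ι_inv (x : ℤ × ℤ) : (ιQ x)⁻¹ = ιQ (-x) := by
  have := ι_zpow x (-1)
  simpa using this

lemma eq_ι_of_right_eq_one {q : Q} (h : q.right = 1) : ∃ x, q = ιQ x := by
  refine ⟨Multiplicative.toAdd q.left, SemidirectProduct.ext ?_ ?_⟩
  · rw [ι_left]; simp
  · rw [ι_right]; exact h

/-- the subgroup of ℤ² of elements mapping into V -/
def Asub (V : Subgroup Q) : AddSubgroup (ℤ × ℤ) where
  carrier := {x | ιQ x ∈ V}
  zero_mem' := by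
    show ιQ 0 ∈ V
    rw [ι_zero]; exact one_mem V
  add_mem' := by
    intro a b ha hb
    show ιQ (a + b) ∈ V
    rw [← ι_mul]; exact mul_mem ha hb
  neg_mem' := by
    intro a ha
    show ιQ (-a) ∈ V
    rw [← ι_inv]; exact inv_mem ha

lemma exists_nonzero_ι (V : Subgroup Q) (e : ↥V ≃* DihedralGroup 0) :
    ∃ a : ℤ × ℤ, a ≠ 0 ∧ ιQ a ∈ V := by
  by_contra hcon
  push_neg at hcon
  have hinj : Function.Injective (fun x : ↥V => (x : Q).right) := by
    intro x y hxy
    have h1 : ((x * y⁻¹ : ↥V) : Q).right = 1 := by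
      push_cast
      rw [SemidirectProduct.mul_right, SemidirectProduct.inv_right]
      simp only at hxy
      rw [hxy, mul_inv_cancel]
    obtain ⟨z, hz⟩ := eq_ι_of_right_eq_one h1
    have hzV : ιQ z ∈ V := hz ▸ (x * y⁻¹).2
    have hz0 : z = 0 := by
      by_contra h0
      exact hcon z h0 hzV
    have : (x * y⁻¹ : ↥V) = 1 := Subtype.ext (by rw [hz, hz0, ι_zero]; rfl)
    exact mul_inv_eq_one.mp (by exact_mod_cast congrArg Subtype.val this)
  have hfin : Finite ↥V := Finite.of_injective _ hinj
  have hinf : Infinite ↥V := Infinite.of_injective (fun n : ℤ => e.symm (r (iz n))) (by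
    intro n m hnm
    have := e.symm.injective hnm
    have h2 : iz n = iz m := by injection this
    exact congrArg zi h2)
  exact absurd hfin (by rw [← not_infinite_iff_finite]; exact fun _ => (by exact absurd hinf (by simp_all)))

lemma exists_mkv (V : Subgroup Q) (e : ↥V ≃* DihedralGroup 0) (c : ℤ × ℤ) (hc : c ≠ 0)
    (hcV : ιQ c ∈ V) (hgen : ∀ x : ℤ × ℤ, ιQ x ∈ V → ∃ k : ℤ, x = k • c) :
    ∃ v, mkv v ∈ V := by
  by_contra hcon
  push_neg at hcon
  have hι : ∀ x : ↥V, ∃ z, (x : Q) = ιQ z := by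
    intro x
    rcases no_one_elt V c hc hcV hgen x.2 with h | ⟨w, hw⟩
    · exact h
    · exact absurd (hw ▸ x.2) (hcon w)
  set x1 : ↥V := e.symm (r (iz 1)) with hx1
  set x2 : ↥V := e.symm (sr (iz 0)) with hx2
  obtain ⟨z1, hz1⟩ := hι x1
  obtain ⟨z2, hz2⟩ := hι x2
  have hcomm : x1 * x2 = x2 * x1 := by
    apply Subtype.ext
    push_cast
    rw [hz1, hz2, ι_mul, ι_mul, add_comm]
  have := congrArg e hcomm
  rw [map_mul, map_mul, hx1, hx2, e.apply_symm_apply, e.apply_symm_apply] at this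
  rw [r_mul_sr, sr_mul_r] at this
  have h2 : iz 0 - iz 1 = iz 0 + iz 1 := by injection this
  have h3 : (0 : ℤ) - 1 = 0 + 1 := congrArg zi h2
  omega

/-- For every infinite dihedral subgroup `V` of `Q = ℤ² ⋊ ℤ/4` there is a subgroup
`V_max = ⟨v₂, (V ∩ ℤ²)_max⟩`, independent of the choice of the order-two element `v₂ ∈ V`,
which is infinite dihedral, contains `V`, is a maximal virtually cyclic subgroup, and
contains every virtually cyclic subgroup `W ⊇ V` (all of which are infinite dihedral). -/
theorem stmt_19 :
    ∀ V : Subgroup Q, Nonempty (V ≃* DihedralGroup 0) →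
      ∃ W : Subgroup Q,
        Nonempty (W ≃* DihedralGroup 0) ∧
        V ≤ W ∧
        (∀ v₂ ∈ V, orderOf v₂ = 2 →
          W = Subgroup.closure
            (insert v₂
              {q : Q | ∃ x : ℤ × ℤ, q = ιQ x ∧ ∃ n : ℤ, n ≠ 0 ∧ ιQ (n • x) ∈ V})) ∧
        (∀ U : Subgroup Q, VirtuallyCyclic U → W ≤ U → W = U) ∧
        (∀ U : Subgroup Q, VirtuallyCyclic U → V ≤ U →
          Nonempty (U ≃* DihedralGroup 0) ∧ U ≤ W) := by
  rintro V ⟨e⟩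
  have hdep := dep_of_iso V e
  obtain ⟨c, hcA, hgen⟩ := rank_one_cyclic (Asub V)
    (fun a ha b hb ha0 hb0 => hdep a b ha hb ha0 hb0)
  obtain ⟨a, ha0, haV⟩ := exists_nonzero_ι V e
  have hc0 : c ≠ 0 := by
    obtain ⟨k, hk⟩ := hgen a haV
    intro h
    rw [h, smul_zero] at hk
    exact ha0 hk
  obtain ⟨v, hv⟩ := exists_mkv V e c hc0 hcA (fun x hx => hgen x hx)
  have hVeq : V = (fD v c).range := struct V v c hc0 hcA (fun x hx => hgen x hx) hv
  -- the saturation subgroup S of (V ∩ ℤ²)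
  set S : AddSubgroup (ℤ × ℤ) :=
    { carrier := {x | ∃ n : ℤ, n ≠ 0 ∧ ιQ (n • x) ∈ V}
      zero_mem' := ⟨1, one_ne_zero, by rw [smul_zero, ι_zero]; exact one_mem V⟩
      add_mem' := by
        rintro p q ⟨n, hn, hna⟩ ⟨m, hm, hmb⟩
        refine ⟨n * m, mul_ne_zero hn hm, ?_⟩
        have h1 : (n * m) • (p + q) = m • (n • p) + n • (m • q) := by
          rw [smul_add, smul_smul, smul_smul, mul_comm m n]
        rw [h1, ← ι_mul]
        exact mul_mem (by rw [← ι_zpow]; exact zpow_mem hna m)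
          (by rw [← ι_zpow]; exact zpow_mem hmb n)
      neg_mem' := by
        rintro p ⟨n, hn, hna⟩
        exact ⟨n, hn, by rw [smul_neg, ← ι_inv]; exact inv_mem hna⟩ } with hSdef
  have hSdep : ∀ p ∈ S, ∀ q ∈ S, p ≠ 0 → q ≠ 0 →
      ∃ i j : ℤ, i ≠ 0 ∧ j ≠ 0 ∧ j • p = i • q := by
    rintro p ⟨n, hn, hna⟩ q ⟨m, hm, hmb⟩ hp0 hq0
    have hnp0 : n • p ≠ 0 := fun h => hn (smul_eq_zero_int h hp0)
    have hmq0 : m • q ≠ 0 := fun h => hm (smul_eq_zero_int h hq0)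
    obtain ⟨i, j, hi, hj, hij⟩ := hdep (n • p) (m • q) hna hmb hnp0 hmq0
    refine ⟨i * m, j * n, mul_ne_zero hi hm, mul_ne_zero hj hn, ?_⟩
    rw [mul_smul, mul_smul, hij]
  obtain ⟨c₀, hc₀S, hgen₀⟩ := rank_one_cyclic S hSdep
  have hcS : c ∈ S := ⟨1, one_ne_zero, by rw [one_smul]; exact hcA⟩
  obtain ⟨m₀, hm₀⟩ := hgen₀ c hcS
  have hc₀0 : c₀ ≠ 0 := by
    intro h
    rw [h, smul_zero] at hm₀
    exact hc0 hm₀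
  have hm₀0 : m₀ ≠ 0 := by
    intro h
    rw [h, zero_smul] at hm₀
    exact hc0 hm₀
  -- key lemma: any virtually cyclic U containing V is infinite dihedral and inside W
  have key : ∀ U : Subgroup Q, VirtuallyCyclic ↥U → V ≤ U →
      Nonempty (↥U ≃* DihedralGroup 0) ∧ U ≤ (fD v c₀).range := by
    intro U hvc hVU
    have hcU : ιQ c ∈ U := hVU hcA
    have hdepU := dep_of_vc U hvc
    obtain ⟨d, hdU, hgenU⟩ := rank_one_cyclic (Asub U)
      (fun p hp q hq hp0 hq0 => hdepU p q hp hq hp0 hq0)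
    obtain ⟨k, hk⟩ := hgenU c hcU
    have hk0 : k ≠ 0 := fun h => hc0 (by rw [hk, h, zero_smul])
    have hd0 : d ≠ 0 := fun h => hc0 (by rw [hk, h, smul_zero])
    have hvU : mkv v ∈ U := hVU hv
    have hUeq : U = (fD v d).range := struct U v d hd0 hdU (fun x hx => hgenU x hx) hvU
    have hdS : d ∈ S := ⟨k, hk0, by rw [← hk]; exact hcA⟩
    obtain ⟨j, hj⟩ := hgen₀ d hdS
    constructor
    · exact ⟨(MulEquiv.subgroupCongr hUeq).trans (MonoidHom.ofInjective (fD_inj hd0)).symm⟩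
    · intro q hq
      rw [hUeq, mem_fD] at hq
      rw [mem_fD]
      rcases hq with ⟨i, rfl⟩ | ⟨i, rfl⟩
      · exact Or.inl ⟨i * j, by rw [mul_smul, ← hj]⟩
      · exact Or.inr ⟨i * j, by rw [mul_smul, ← hj]⟩
  -- the maximal subgroup W
  refine ⟨(fD v c₀).range, ⟨(MonoidHom.ofInjective (fD_inj hc₀0)).symm⟩, ?_, ?_, ?_, ?_⟩
  -- V ≤ W
  case refine_1 =>
    intro q hq
    rw [hVeq, mem_fD] at hq
    rw [mem_fD]
    rcases hq with ⟨i, rfl⟩ | ⟨i, rfl⟩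
    · exact Or.inl ⟨i * m₀, by rw [mul_smul, ← hm₀]⟩
    · exact Or.inr ⟨i * m₀, by rw [mul_smul, ← hm₀]⟩
  case refine_2 =>
    -- W is the closure of v₂ and the saturation set, for every order-two v₂ ∈ V
    intro v₂ hv₂V hordv₂
    have hv₂W : v₂ ∈ (fD v c₀).range := by
      rw [hVeq, mem_fD] at hv₂V
      rw [mem_fD]
      rcases hv₂V with ⟨i, rfl⟩ | ⟨i, rfl⟩
      · exact Or.inl ⟨i * m₀, by rw [mul_smul, ← hm₀]⟩
      · exact Or.inr ⟨i * m₀, by rw [mul_smul, ← hm₀]⟩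
    -- v₂ must be a reflection
    have hv₂V' := hv₂V
    rw [hVeq, mem_fD] at hv₂V'
    have hsq : v₂ * v₂ = 1 := by
      have := pow_orderOf_eq_one v₂
      rw [hordv₂, pow_two] at this
      exact this
    obtain ⟨k₁, hk₁⟩ : ∃ i : ℤ, v₂ = mkv (v - i • c) := by
      rcases hv₂V' with ⟨i, hi⟩ | h
      · exfalso
        rw [hi, ι_mul] at hsq
        have h0 := ι_eq_one hsq
        have h2 : (2 : ℤ) • (i • c) = 0 := by rw [two_smul]; exact h0
        have h3 : i • c = 0 := smul_eq_zero_vec two_ne_zero h2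
        rw [h3, ι_zero] at hi
        rw [hi, orderOf_one] at hordv₂
        omega
      · exact h
    apply le_antisymm
    · -- W ≤ closure
      intro q hq
      rw [mem_fD] at hq
      have hTsub : ∀ x ∈ S, ιQ x ∈ Subgroup.closure
          (insert v₂ {q : Q | ∃ x : ℤ × ℤ, q = ιQ x ∧ ∃ n : ℤ, n ≠ 0 ∧ ιQ (n • x) ∈ V}) := by
        rintro x ⟨n, hn, hnx⟩
        exact Subgroup.subset_closure (Set.mem_insert_of_mem _ ⟨x, rfl, n, hn, hnx⟩)
      rcases hq with ⟨i, rfl⟩ | ⟨i, rfl⟩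
      · exact hTsub _ (S.zsmul_mem hc₀S i)
      · have hxS : (k₁ • c - i • c₀) ∈ S :=
          S.sub_mem (S.zsmul_mem hcS k₁) (S.zsmul_mem hc₀S i)
        have hdecomp : mkv (v - i • c₀) = ιQ (k₁ • c - i • c₀) * v₂ := by
          rw [hk₁, ι_mul_mkv]
          congr 1
          abel
        rw [hdecomp]
        exact mul_mem (hTsub _ hxS) (Subgroup.subset_closure (Set.mem_insert _ _))
    · -- closure ≤ W
      rw [Subgroup.closure_le]
      intro q hq
      rcases hq with rfl | ⟨x, rfl, n, hn, hnx⟩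
      · exact hv₂W
      · have hxS : x ∈ S := ⟨n, hn, hnx⟩
        obtain ⟨kk, hkk⟩ := hgen₀ x hxS
        rw [SetLike.mem_coe, mem_fD]
        exact Or.inl ⟨kk, by rw [hkk]⟩
  case refine_3 =>
    intro U hvc hWU
    have hVU : V ≤ U := by
      intro q hq
      apply hWU
      rw [hVeq, mem_fD] at hq
      rw [mem_fD]
      rcases hq with ⟨i, rfl⟩ | ⟨i, rfl⟩
      · exact Or.inl ⟨i * m₀, by rw [mul_smul, ← hm₀]⟩
      · exact Or.inr ⟨i * m₀, by rw [mul_smul, ← hm₀]⟩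
    exact le_antisymm hWU (key U hvc hVU).2
  case refine_4 =>
    intro U hvc hVU
    exact key U hvc hVU
end
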